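/- For two probability measures μ and ν on the real line with finite second moments and quantile functions F^{-1} and G^{-1}, the squared 2-Wasserstein distance satisfies W₂²(μ,ν) = ∫₀¹ (F^{-1}(t) - G^{-1}(t))² dt. -/

import Mathlib

open MeasureTheory

noncomputable section

/-- Squared 2-Wasserstein distance on ℝ: infimum over couplings of ∫ (x-y)² dπ. -/
def W2sq (μ ν : Measure ℝ) : ℝ :=
  sInf { c | ∃ π : Measure (ℝ × ℝ), IsProbabilityMeasure π ∧
    π.map Prod.fst = μ ∧ π.map Prod.snd = ν ∧
    c = ∫ p, (p.1 - p.2) ^ 2 ∂π }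

/-- Quantile function: F⁻¹(t) = inf {x : F(x) ≥ t}. -/
def quantile (μ : Measure ℝ) (t : ℝ) : ℝ :=
  sInf { x | ENNReal.ofReal t ≤ μ (Set.Iic x) }


open Set Filter Topology

section QuantileBasic
variable {μ : Measure ℝ} [IsProbabilityMeasure μ] {t : ℝ}

lemma qSet_nonempty (ht1 : t < 1) : { x | ENNReal.ofReal t ≤ μ (Set.Iic x) }.Nonempty := by
  have h := tendsto_measure_Iic_atTop μ
  rw [measure_univ] at h
  have hlt : ENNReal.ofReal t < 1 := by
    rw [← ENNReal.ofReal_one]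
    exact (ENNReal.ofReal_lt_ofReal_iff one_pos).2 ht1
  obtain ⟨x, hx⟩ := (h.eventually (eventually_gt_nhds hlt)).exists
  exact ⟨x, hx.le⟩

lemma qSet_bddBelow (ht : 0 < t) : BddBelow { x | ENNReal.ofReal t ≤ μ (Set.Iic x) } := by
  have h : Tendsto (fun x : ℝ => μ (Iic x)) atBot (𝓝 (μ (⋂ n : ℝ, Iic n))) := by
    have := tendsto_measure_iInter_atBot (μ := μ) (s := fun x : ℝ => Iic x)
      (fun i => measurableSet_Iic.nullMeasurableSet) (fun i j hij => Iic_subset_Iic.2 hij)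
      ⟨0, measure_ne_top μ _⟩
    exact this
  have hempty : (⋂ n : ℝ, Iic n) = (∅ : Set ℝ) := by
    ext x; simp only [mem_iInter, mem_Iic, mem_empty_iff_false, iff_false, not_forall, not_le]
    exact ⟨x - 1, by linarith⟩
  rw [hempty, measure_empty] at h
  have hpos : (0 : ENNReal) < ENNReal.ofReal t := ENNReal.ofReal_pos.2 ht
  obtain ⟨x, hx⟩ := (h.eventually (eventually_lt_nhds hpos)).exists
  -- hx : μ (Iic x) < ofReal t; eventually in atBot so all y ≤ x fail
  refine ⟨x, fun y hy => ?_⟩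
  by_contra hlt
  push_neg at hlt
  exact absurd (le_trans hy (measure_mono (Iic_subset_Iic.2 hlt.le))) (not_le.2 hx)

lemma quantile_mem (ht : 0 < t) (ht1 : t < 1) :
    ENNReal.ofReal t ≤ μ (Iic (quantile μ t)) := by
  set S := { x | ENNReal.ofReal t ≤ μ (Set.Iic x) } with hS
  have hne := qSet_nonempty (μ := μ) ht1
  have hbd := qSet_bddBelow (μ := μ) ht
  have hup : ∀ x ∈ S, ∀ y, x ≤ y → y ∈ S := fun x hx y hxy =>
    le_trans hx (measure_mono (Iic_subset_Iic.2 hxy))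
  have hmem : ∀ n : ℕ, quantile μ t + 1 / (n + 1) ∈ S := by
    intro n
    obtain ⟨y, hy, hylt⟩ := Real.lt_sInf_add_pos hne (by positivity : (0:ℝ) < 1 / (n + 1))
    exact hup y hy _ (by rw [quantile]; linarith)
  have hconv : Tendsto (fun n : ℕ => μ (Iic (quantile μ t + 1 / (n + 1)))) atTop
      (𝓝 (μ (⋂ n : ℕ, Iic (quantile μ t + 1 / (n + 1))))) := by
    exact tendsto_measure_iInter_atTop (fun n => measurableSet_Iic.nullMeasurableSet)
      (fun i j hij => Iic_subset_Iic.2 (by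
        have : (1:ℝ) / (j + 1) ≤ 1 / (i + 1) := by
          apply one_div_le_one_div_of_le (by positivity)
          exact_mod_cast by omega
        linarith)) ⟨0, measure_ne_top μ _⟩
  have hInter : (⋂ n : ℕ, Iic (quantile μ t + 1 / ((n:ℝ) + 1))) = Iic (quantile μ t) := by
    ext x
    simp only [mem_iInter, mem_Iic]
    constructor
    · intro h
      by_contra hx
      push_neg at hx
      obtain ⟨n, hn⟩ := exists_nat_one_div_lt (by linarith : (0:ℝ) < x - quantile μ t)
      exact absurd (h n) (by push_neg; linarith)
    · intro h n
      have h2 : (0:ℝ) < 1 / ((n:ℝ) + 1) := by positivity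
      linarith
  rw [hInter] at hconv
  exact ge_of_tendsto' hconv fun n => hmem n

lemma quantile_le_iff (ht : 0 < t) (ht1 : t < 1) {x : ℝ} :
    quantile μ t ≤ x ↔ ENNReal.ofReal t ≤ μ (Iic x) := by
  constructor
  · intro h
    exact le_trans (quantile_mem ht ht1) (measure_mono (Iic_subset_Iic.2 h))
  · intro h
    exact csInf_le (qSet_bddBelow ht) h

lemma lt_quantile_iff (ht : 0 < t) (ht1 : t < 1) {x : ℝ} :
    x < quantile μ t ↔ μ (Iic x) < ENNReal.ofReal t := by
  rw [← not_le, ← not_le, quantile_le_iff ht ht1]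

lemma quantile_monotoneOn (μ : Measure ℝ) [IsProbabilityMeasure μ] :
    MonotoneOn (quantile μ) (Ioo 0 1) := by
  intro s hs t ht hst
  exact csInf_le_csInf (qSet_bddBelow hs.1) (qSet_nonempty ht.2)
    (fun x hx => le_trans (ENNReal.ofReal_le_ofReal hst) hx)

lemma quantile_aemeasurable (μ : Measure ℝ) [IsProbabilityMeasure μ] :
    AEMeasurable (quantile μ) (volume.restrict (Ioo 0 1)) :=
  aemeasurable_restrict_of_monotoneOn measurableSet_Ioo (quantile_monotoneOn μ)

end QuantileBasic

instance : IsProbabilityMeasure (volume.restrict (Ioo (0:ℝ) 1)) :=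
  ⟨by rw [Measure.restrict_apply_univ, Real.volume_Ioo]; norm_num⟩

lemma quantile_map (μ : Measure ℝ) [IsProbabilityMeasure μ] :
    (volume.restrict (Ioo (0:ℝ) 1)).map (quantile μ) = μ := by
  refine Measure.ext_of_Iic _ _ (fun x => ?_)
  rw [Measure.map_apply_of_aemeasurable (quantile_aemeasurable μ) measurableSet_Iic,
    Measure.restrict_apply₀' measurableSet_Ioo.nullMeasurableSet]
  set c := (μ (Iic x)).toReal with hc
  have hc0 : 0 ≤ c := ENNReal.toReal_nonneg
  have hc1 : c ≤ 1 := by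
    rw [hc]
    exact ENNReal.toReal_le_of_le_ofReal one_pos.le (by simpa using prob_le_one)
  have hset : quantile μ ⁻¹' Iic x ∩ Ioo 0 1 = Ioo 0 1 ∩ Iic c := by
    ext t
    simp only [mem_inter_iff, mem_preimage, mem_Iic, mem_Ioo]
    rw [and_comm]
    refine and_congr_right fun htm => ?_
    rw [quantile_le_iff htm.1 htm.2,
      ENNReal.ofReal_le_iff_le_toReal (measure_ne_top μ _)]
  rw [hset]
  rcases lt_or_ge c 1 with h | h
  · have : Ioo (0:ℝ) 1 ∩ Iic c = Ioc 0 c := by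
      ext t; simp only [mem_inter_iff, mem_Ioo, mem_Iic, mem_Ioc]
      constructor
      · rintro ⟨⟨h1, h2⟩, h3⟩; exact ⟨h1, h3⟩
      · rintro ⟨h1, h2⟩; exact ⟨⟨h1, lt_of_le_of_lt h2 h⟩, h2⟩
    rw [this, Real.volume_Ioc, hc, sub_zero, ENNReal.ofReal_toReal (measure_ne_top μ _)]
  · have hc1' : c = 1 := le_antisymm hc1 h
    have : Ioo (0:ℝ) 1 ∩ Iic c = Ioo 0 1 := by
      rw [hc1']
      exact inter_eq_left.2 fun t ht => ht.2.le
    rw [this, Real.volume_Ioo]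
    rw [show (1:ℝ) - 0 = c by rw [hc1']; ring, hc, ENNReal.ofReal_toReal (measure_ne_top μ _)]


section CouplingSetup
variable (μ ν : Measure ℝ) [IsProbabilityMeasure μ] [IsProbabilityMeasure ν]

def qpair (t : ℝ) : ℝ × ℝ := (quantile μ t, quantile ν t)

lemma qpair_aemeasurable : AEMeasurable (qpair μ ν) (volume.restrict (Ioo 0 1)) :=
  (quantile_aemeasurable μ).prodMk (quantile_aemeasurable ν)

def qcoupling : Measure (ℝ × ℝ) := (volume.restrict (Ioo (0:ℝ) 1)).map (qpair μ ν)

instance : IsProbabilityMeasure (qcoupling μ ν) :=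
  Measure.isProbabilityMeasure_map (qpair_aemeasurable μ ν)

lemma qcoupling_fst : (qcoupling μ ν).map Prod.fst = μ := by
  rw [qcoupling, AEMeasurable.map_map_of_aemeasurable measurable_fst.aemeasurable
    (qpair_aemeasurable μ ν)]
  exact quantile_map μ

lemma qcoupling_snd : (qcoupling μ ν).map Prod.snd = ν := by
  rw [qcoupling, AEMeasurable.map_map_of_aemeasurable measurable_snd.aemeasurable
    (qpair_aemeasurable μ ν)]
  exact quantile_map ν

lemma marginal_fst_apply (π : Measure (ℝ × ℝ)) (hf : π.map Prod.fst = μ) {s : Set ℝ}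
    (hs : MeasurableSet s) : μ s = π (s ×ˢ univ) := by
  rw [← hf, Measure.map_apply measurable_fst hs]
  congr 1
  ext p; simp [Set.mem_prod]

lemma marginal_snd_apply (π : Measure (ℝ × ℝ)) (hf : π.map Prod.snd = ν) {s : Set ℝ}
    (hs : MeasurableSet s) : ν s = π (univ ×ˢ s) := by
  rw [← hf, Measure.map_apply measurable_snd hs]
  congr 1
  ext p; simp [Set.mem_prod]

lemma coupling_quadrant_le (π : Measure (ℝ × ℝ)) (hf : π.map Prod.fst = μ)
    (hg : π.map Prod.snd = ν) (s u : ℝ) :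
    π (Ioi s ×ˢ Ioi u) ≤ min (μ (Ioi s)) (ν (Ioi u)) := by
  refine le_min ?_ ?_
  · rw [marginal_fst_apply μ π hf measurableSet_Ioi]
    exact measure_mono (prod_mono_right (subset_univ _))
  · rw [marginal_snd_apply ν π hg measurableSet_Ioi]
    exact measure_mono (prod_mono_left (subset_univ _))

lemma measure_Iic_lt_ofReal_iff {μ : Measure ℝ} [IsProbabilityMeasure μ] {t : ℝ}
    (ht : 0 < t) (ht1 : t < 1) {x : ℝ} :
    x < quantile μ t ↔ (μ (Iic x)).toReal < t := by
  rw [← not_le, quantile_le_iff ht ht1, not_le,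
    ENNReal.lt_ofReal_iff_toReal_lt (measure_ne_top μ _)]

lemma prob_Ioi (μ : Measure ℝ) [IsProbabilityMeasure μ] (s : ℝ) :
    μ (Ioi s) = ENNReal.ofReal (1 - (μ (Iic s)).toReal) := by
  have h1 : Ioi s = (Iic s)ᶜ := by simp
  rw [h1, measure_compl measurableSet_Iic (measure_ne_top μ _), measure_univ]
  rw [ENNReal.ofReal_sub _ ENNReal.toReal_nonneg, ENNReal.ofReal_one,
    ENNReal.ofReal_toReal (measure_ne_top μ _)]

lemma qcoupling_quadrant (s u : ℝ) :
    qcoupling μ ν (Ioi s ×ˢ Ioi u) = min (μ (Ioi s)) (ν (Ioi u)) := by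
  rw [qcoupling, Measure.map_apply_of_aemeasurable (qpair_aemeasurable μ ν)
    (measurableSet_Ioi.prod measurableSet_Ioi),
    Measure.restrict_apply₀' measurableSet_Ioo.nullMeasurableSet]
  set a := (μ (Iic s)).toReal with ha
  set b := (ν (Iic u)).toReal with hb
  have ha0 : 0 ≤ a := ENNReal.toReal_nonneg
  have hb0 : 0 ≤ b := ENNReal.toReal_nonneg
  have ha1 : a ≤ 1 := ENNReal.toReal_le_of_le_ofReal one_pos.le (by simpa using prob_le_one)
  have hb1 : b ≤ 1 := ENNReal.toReal_le_of_le_ofReal one_pos.le (by simpa using prob_le_one)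
  have hset : qpair μ ν ⁻¹' (Ioi s ×ˢ Ioi u) ∩ Ioo 0 1 = Ioo (max a b) 1 := by
    ext t
    simp only [mem_inter_iff, mem_preimage, qpair, mem_prod, mem_Ioi, mem_Ioo, max_lt_iff]
    constructor
    · rintro ⟨⟨h1, h2⟩, h3, h4⟩
      exact ⟨⟨(measure_Iic_lt_ofReal_iff h3 h4).1 h1,
        (measure_Iic_lt_ofReal_iff h3 h4).1 h2⟩, h4⟩
    · rintro ⟨⟨h1, h2⟩, h4⟩
      have h3 : 0 < t := lt_of_le_of_lt ha0 h1
      exact ⟨⟨(measure_Iic_lt_ofReal_iff h3 h4).2 h1,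
        (measure_Iic_lt_ofReal_iff h3 h4).2 h2⟩, h3, h4⟩
  rw [hset, Real.volume_Ioo, prob_Ioi μ s, prob_Ioi ν u, ← ha, ← hb]
  rcases le_total a b with h | h
  · rw [max_eq_right h, min_eq_right (ENNReal.ofReal_le_ofReal (by linarith))]
  · rw [max_eq_left h, min_eq_left (ENNReal.ofReal_le_ofReal (by linarith))]

end CouplingSetup

/-- f x s = 1_{s<x} - 1_{s<0}; satisfies ∫ f x s ds = x. -/
def hf (x s : ℝ) : ℝ := (Ioi s).indicator 1 x - (Iio (0:ℝ)).indicator 1 s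

lemma hf_eq (x s : ℝ) : hf x s = (Ico (0:ℝ) x).indicator 1 s - (Ico x 0).indicator 1 s := by
  simp only [hf, indicator, mem_Ioi, mem_Iio, mem_Ico, Pi.one_apply]
  split_ifs <;> simp_all <;> linarith

lemma hf_abs (x s : ℝ) : |hf x s| = (Ico (0:ℝ) x).indicator 1 s + (Ico x 0).indicator 1 s := by
  rw [hf_eq]
  simp only [indicator, mem_Ico, Pi.one_apply]
  split_ifs <;> simp_all <;> linarith

lemma indicator_Ico_integrable (a b : ℝ) : Integrable ((Ico a b).indicator (1 : ℝ → ℝ)) volume := by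
  rw [integrable_indicator_iff measurableSet_Ico]
  exact integrableOn_const (by rw [Real.volume_Ico]; exact ENNReal.ofReal_ne_top)

lemma hf_integrable (x : ℝ) : Integrable (hf x) volume := by
  apply ((indicator_Ico_integrable 0 x).sub (indicator_Ico_integrable x 0)).congr
  filter_upwards with s
  rw [hf_eq]; rfl

lemma toReal_volume_Ico (a b : ℝ) : (volume (Ico a b)).toReal = max (b - a) 0 := by
  rw [Real.volume_Ico]
  rcases le_total (b - a) 0 with h | h
  · rw [ENNReal.ofReal_of_nonpos h, max_eq_right h]; simp
  · rw [ENNReal.toReal_ofReal h, max_eq_left h]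

lemma hf_integral (x : ℝ) : ∫ s, hf x s = x := by
  have : ∫ s, hf x s = (∫ s, (Ico (0:ℝ) x).indicator 1 s) - ∫ s, (Ico x 0).indicator 1 s := by
    rw [← integral_sub (indicator_Ico_integrable 0 x) (indicator_Ico_integrable x 0)]
    congr 1; ext s; rw [hf_eq]
  rw [this, integral_indicator_one measurableSet_Ico, integral_indicator_one measurableSet_Ico,
    measureReal_def, measureReal_def, toReal_volume_Ico, toReal_volume_Ico]
  rcases le_total 0 x with h | h
  · rw [max_eq_left (by linarith), max_eq_right (by linarith)]; ring
  · rw [max_eq_right (by linarith), max_eq_left (by linarith)]; ring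

lemma hf_abs_integral (x : ℝ) : ∫ s, |hf x s| = |x| := by
  have : ∫ s, |hf x s| = (∫ s, (Ico (0:ℝ) x).indicator 1 s) + ∫ s, (Ico x 0).indicator 1 s := by
    rw [← integral_add (indicator_Ico_integrable 0 x) (indicator_Ico_integrable x 0)]
    congr 1; ext s; rw [hf_abs]
  rw [this, integral_indicator_one measurableSet_Ico, integral_indicator_one measurableSet_Ico,
    measureReal_def, measureReal_def, toReal_volume_Ico, toReal_volume_Ico]
  rcases le_total 0 x with h | h
  · rw [max_eq_left (by linarith), max_eq_right (by linarith), abs_of_nonneg h]; ring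
  · rw [max_eq_right (by linarith), max_eq_left (by linarith), abs_of_nonpos h]; ring

lemma hf_measurable2 : Measurable (fun z : ℝ × ℝ => hf z.1 z.2) := by
  unfold hf
  apply Measurable.sub
  · have : (fun z : ℝ × ℝ => (Ioi z.2).indicator (1 : ℝ → ℝ) z.1)
        = (fun z : ℝ × ℝ => ({w : ℝ × ℝ | w.2 < w.1} : Set (ℝ × ℝ)).indicator 1 z) := by
      ext z; simp [indicator, mem_Ioi]
    rw [this]
    exact (measurable_const.indicator (measurableSet_lt measurable_snd measurable_fst))
  · exact measurable_const.indicator measurableSet_Iio |>.comp measurable_snd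


section CouplingMain
variable (μ ν : Measure ℝ) [IsProbabilityMeasure μ] [IsProbabilityMeasure ν]

section Coupling
variable (π : Measure (ℝ × ℝ)) [IsProbabilityMeasure π]

lemma indicator_integrable {E : Set (ℝ × ℝ)} (hE : MeasurableSet E) :
    Integrable (E.indicator (1 : ℝ × ℝ → ℝ)) π := by
  rw [integrable_indicator_iff hE]
  exact integrableOn_const (measure_lt_top π E).ne

/-- Expansion of ∫ hf(x,s) hf(y,u) dπ(x,y). -/
lemma coupling_term_eq (hfst : π.map Prod.fst = μ) (hsnd : π.map Prod.snd = ν) (s u : ℝ) :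
    ∫ p : ℝ × ℝ, hf p.1 s * hf p.2 u ∂π =
      (π (Ioi s ×ˢ Ioi u)).toReal
        - (Iio (0:ℝ)).indicator 1 u * (μ (Ioi s)).toReal
        - (Iio (0:ℝ)).indicator 1 s * (ν (Ioi u)).toReal
        + (Iio (0:ℝ)).indicator 1 s * (Iio (0:ℝ)).indicator 1 u := by
  set a := (Iio (0:ℝ)).indicator (1 : ℝ → ℝ) s with ha
  set b := (Iio (0:ℝ)).indicator (1 : ℝ → ℝ) u with hb
  have key : ∀ p : ℝ × ℝ, hf p.1 s * hf p.2 u =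
      (Ioi s ×ˢ Ioi u).indicator 1 p - b * (Ioi s ×ˢ (univ : Set ℝ)).indicator 1 p
        - a * ((univ : Set ℝ) ×ˢ Ioi u).indicator 1 p + a * b := by
    intro p
    simp only [hf, ha, hb]
    simp only [indicator, mem_prod, mem_Ioi, mem_Iio, mem_univ, and_true, true_and, Pi.one_apply]
    split_ifs <;> simp_all <;> ring
  have h1 := indicator_integrable π (E := Ioi s ×ˢ Ioi u) (measurableSet_Ioi.prod measurableSet_Ioi)
  have h2 := (indicator_integrable π (E := Ioi s ×ˢ (univ : Set ℝ)) (measurableSet_Ioi.prod MeasurableSet.univ)).const_mul b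
  have h3 := (indicator_integrable π (E := (univ : Set ℝ) ×ˢ Ioi u) (MeasurableSet.univ.prod measurableSet_Ioi)).const_mul a
  have : ∫ p : ℝ × ℝ, hf p.1 s * hf p.2 u ∂π =
      ∫ p : ℝ × ℝ, ((Ioi s ×ˢ Ioi u).indicator 1 p - b * (Ioi s ×ˢ (univ : Set ℝ)).indicator 1 p
        - a * ((univ : Set ℝ) ×ˢ Ioi u).indicator 1 p + a * b) ∂π := by
    congr 1; ext p; exact key p
  have i12 : Integrable (fun p : ℝ × ℝ => (Ioi s ×ˢ Ioi u).indicator 1 p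
      - b * (Ioi s ×ˢ (univ : Set ℝ)).indicator 1 p) π := h1.sub h2
  have i123 : Integrable (fun p : ℝ × ℝ => (Ioi s ×ˢ Ioi u).indicator 1 p
      - b * (Ioi s ×ˢ (univ : Set ℝ)).indicator 1 p
      - a * ((univ : Set ℝ) ×ˢ Ioi u).indicator 1 p) π := i12.sub h3
  rw [this, integral_add i123 (integrable_const _),
    integral_sub i12 h3, integral_sub h1 h2,
    integral_indicator_one (measurableSet_Ioi.prod measurableSet_Ioi),
    integral_const_mul, integral_const_mul,
    integral_indicator_one (measurableSet_Ioi.prod MeasurableSet.univ),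
    integral_indicator_one (MeasurableSet.univ.prod measurableSet_Ioi),
    integral_const]
  simp only [measureReal_def, measure_univ, ENNReal.toReal_one, one_smul]
  rw [← marginal_fst_apply μ π hfst measurableSet_Ioi,
    ← marginal_snd_apply ν π hsnd measurableSet_Ioi]

lemma integrable_sq_fst (hfst : π.map Prod.fst = μ) (hμ : Integrable (fun x => x ^ 2) μ) :
    Integrable (fun p : ℝ × ℝ => p.1 ^ 2) π := by
  have := (integrable_map_measure (f := Prod.fst) (g := fun x : ℝ => x ^ 2)
    (by rw [hfst]; exact hμ.aestronglyMeasurable) measurable_fst.aemeasurable).1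
  rw [hfst] at this
  exact this hμ

lemma integrable_sq_snd (hsnd : π.map Prod.snd = ν) (hν : Integrable (fun x => x ^ 2) ν) :
    Integrable (fun p : ℝ × ℝ => p.2 ^ 2) π := by
  have := (integrable_map_measure (f := Prod.snd) (g := fun x : ℝ => x ^ 2)
    (by rw [hsnd]; exact hν.aestronglyMeasurable) measurable_snd.aemeasurable).1
  rw [hsnd] at this
  exact this hν

lemma integrable_mul (hfst : π.map Prod.fst = μ) (hsnd : π.map Prod.snd = ν) (hμ : Integrable (fun x => x ^ 2) μ) (hν : Integrable (fun x => x ^ 2) ν) :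
    Integrable (fun p : ℝ × ℝ => p.1 * p.2) π := by
  have h1 := integrable_sq_fst μ π hfst hμ
  have h2 := integrable_sq_snd ν π hsnd hν
  refine Integrable.mono' (((h1.add h2).div_const 2))
    ((measurable_fst.mul measurable_snd).aestronglyMeasurable) ?_
  filter_upwards with p
  rw [Real.norm_eq_abs, abs_mul]
  have h := sq_nonneg (|p.1| - |p.2|)
  have e1 : |p.1| ^ 2 = p.1 ^ 2 := sq_abs p.1
  have e2 : |p.2| ^ 2 = p.2 ^ 2 := sq_abs p.2
  simp only [Pi.add_apply]
  nlinarith [abs_nonneg p.1, abs_nonneg p.2]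

end Coupling

section Coupling2
variable (π : Measure (ℝ × ℝ)) [IsProbabilityMeasure π]

lemma prod_integrand_integral (p : ℝ × ℝ) :
    ∫ q : ℝ × ℝ, hf p.1 q.1 * hf p.2 q.2 = p.1 * p.2 := by
  rw [Measure.volume_eq_prod, integral_prod_mul (hf p.1) (hf p.2), hf_integral, hf_integral]

lemma bigF_integrable (hfst : π.map Prod.fst = μ) (hsnd : π.map Prod.snd = ν)
    (hμ : Integrable (fun x => x ^ 2) μ) (hν : Integrable (fun x => x ^ 2) ν) :
    Integrable (fun z : (ℝ × ℝ) × (ℝ × ℝ) => hf z.1.1 z.2.1 * hf z.1.2 z.2.2)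
      (π.prod volume) := by
  have hmeas : AEStronglyMeasurable
      (fun z : (ℝ × ℝ) × (ℝ × ℝ) => hf z.1.1 z.2.1 * hf z.1.2 z.2.2) (π.prod volume) := by
    refine Measurable.aestronglyMeasurable ?_
    exact (hf_measurable2.comp ((measurable_fst.fst).prodMk (measurable_snd.fst))).mul
      (hf_measurable2.comp ((measurable_fst.snd).prodMk (measurable_snd.snd)))
  rw [integrable_prod_iff hmeas]
  constructor
  · filter_upwards with p
    rw [Measure.volume_eq_prod]
    exact (hf_integrable p.1).mul_prod (hf_integrable p.2)
  · have : (fun p : ℝ × ℝ => ∫ q : ℝ × ℝ, ‖hf p.1 q.1 * hf p.2 q.2‖) =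
        fun p : ℝ × ℝ => |p.1| * |p.2| := by
      ext p
      have : ∀ q : ℝ × ℝ, ‖hf p.1 q.1 * hf p.2 q.2‖ = |hf p.1 q.1| * |hf p.2 q.2| := by
        intro q; rw [Real.norm_eq_abs, abs_mul]
      simp_rw [this]
      rw [Measure.volume_eq_prod,
        integral_prod_mul (fun s => |hf p.1 s|) (fun s => |hf p.2 s|),
        hf_abs_integral, hf_abs_integral]
    rw [this]
    have h := (integrable_mul μ ν π hfst hsnd hμ hν).abs
    apply h.congr
    filter_upwards with p
    rw [abs_mul]

lemma coupling_mul_integral_eq (hfst : π.map Prod.fst = μ) (hsnd : π.map Prod.snd = ν)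
    (hμ : Integrable (fun x => x ^ 2) μ) (hν : Integrable (fun x => x ^ 2) ν) :
    ∫ p : ℝ × ℝ, p.1 * p.2 ∂π =
      ∫ q : ℝ × ℝ, (∫ p : ℝ × ℝ, hf p.1 q.1 * hf p.2 q.2 ∂π) := by
  have h1 : ∫ p : ℝ × ℝ, p.1 * p.2 ∂π =
      ∫ p : ℝ × ℝ, (∫ q : ℝ × ℝ, hf p.1 q.1 * hf p.2 q.2) ∂π := by
    congr 1; ext p; rw [prod_integrand_integral]
  rw [h1]
  exact integral_integral_swap (bigF_integrable μ ν π hfst hsnd hμ hν)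

lemma inner_integrable (hfst : π.map Prod.fst = μ) (hsnd : π.map Prod.snd = ν)
    (hμ : Integrable (fun x => x ^ 2) μ) (hν : Integrable (fun x => x ^ 2) ν) :
    Integrable (fun q : ℝ × ℝ => ∫ p : ℝ × ℝ, hf p.1 q.1 * hf p.2 q.2 ∂π) volume :=
  (bigF_integrable μ ν π hfst hsnd hμ hν).integral_prod_right

lemma coupling_mul_le (hfst : π.map Prod.fst = μ) (hsnd : π.map Prod.snd = ν)
    (hμ : Integrable (fun x => x ^ 2) μ) (hν : Integrable (fun x => x ^ 2) ν) :
    ∫ p : ℝ × ℝ, p.1 * p.2 ∂π ≤ ∫ p : ℝ × ℝ, p.1 * p.2 ∂(qcoupling μ ν) := by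
  have : IsProbabilityMeasure (qcoupling μ ν) := inferInstance
  rw [coupling_mul_integral_eq μ ν π hfst hsnd hμ hν,
    coupling_mul_integral_eq μ ν (qcoupling μ ν) (qcoupling_fst μ ν) (qcoupling_snd μ ν) hμ hν]
  apply integral_mono (inner_integrable μ ν π hfst hsnd hμ hν)
    (inner_integrable μ ν (qcoupling μ ν) (qcoupling_fst μ ν) (qcoupling_snd μ ν) hμ hν)
  intro q
  simp only []
  rw [coupling_term_eq μ ν π hfst hsnd q.1 q.2,
    coupling_term_eq μ ν (qcoupling μ ν) (qcoupling_fst μ ν) (qcoupling_snd μ ν) q.1 q.2]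
  have hq : π (Ioi q.1 ×ˢ Ioi q.2) ≤ qcoupling μ ν (Ioi q.1 ×ˢ Ioi q.2) := by
    rw [qcoupling_quadrant]
    exact coupling_quadrant_le μ ν π hfst hsnd q.1 q.2
  have := ENNReal.toReal_mono (measure_ne_top (qcoupling μ ν) _) hq
  linarith

end Coupling2

lemma coupling_sq_expand (π : Measure (ℝ × ℝ)) [IsProbabilityMeasure π]
    (hfst : π.map Prod.fst = μ) (hsnd : π.map Prod.snd = ν)
    (hμ : Integrable (fun x => x ^ 2) μ) (hν : Integrable (fun x => x ^ 2) ν) :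
    ∫ p : ℝ × ℝ, (p.1 - p.2) ^ 2 ∂π =
      (∫ x, x ^ 2 ∂μ) + (∫ x, x ^ 2 ∂ν) - 2 * ∫ p : ℝ × ℝ, p.1 * p.2 ∂π := by
  have h1 := integrable_sq_fst μ π hfst hμ
  have h2 := integrable_sq_snd ν π hsnd hν
  have h3 := integrable_mul μ ν π hfst hsnd hμ hν
  have key : ∫ p : ℝ × ℝ, (p.1 - p.2) ^ 2 ∂π =
      ∫ p : ℝ × ℝ, (p.1 ^ 2 + p.2 ^ 2 - 2 * (p.1 * p.2)) ∂π := by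
    congr 1; ext p; ring
  have e1 : ∫ p : ℝ × ℝ, p.1 ^ 2 ∂π = ∫ x, x ^ 2 ∂μ := by
    rw [← hfst, integral_map measurable_fst.aemeasurable]
    exact (measurable_id.pow_const 2).aestronglyMeasurable
  have e2 : ∫ p : ℝ × ℝ, p.2 ^ 2 ∂π = ∫ x, x ^ 2 ∂ν := by
    rw [← hsnd, integral_map measurable_snd.aemeasurable]
    exact (measurable_id.pow_const 2).aestronglyMeasurable
  have h12 : Integrable (fun p : ℝ × ℝ => p.1 ^ 2 + p.2 ^ 2) π := h1.add h2
  have h32 : Integrable (fun p : ℝ × ℝ => 2 * (p.1 * p.2)) π := h3.const_mul 2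
  rw [key, integral_sub h12 h32, integral_add h1 h2, integral_const_mul, e1, e2]

lemma qcoupling_sq_integral :
    ∫ p : ℝ × ℝ, (p.1 - p.2) ^ 2 ∂(qcoupling μ ν) =
      ∫ t in Ioo (0:ℝ) 1, (quantile μ t - quantile ν t) ^ 2 := by
  rw [qcoupling, integral_map (qpair_aemeasurable μ ν) (f := fun p : ℝ × ℝ => (p.1 - p.2) ^ 2)
    (((measurable_fst.sub measurable_snd).pow_const 2).aestronglyMeasurable)]
  rfl

end CouplingMain

theorem stmt_0 (μ ν : Measure ℝ) [IsProbabilityMeasure μ] [IsProbabilityMeasure ν]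
    (hμ : Integrable (fun x => x ^ 2) μ) (hν : Integrable (fun x => x ^ 2) ν) :
    W2sq μ ν = ∫ t in Set.Ioo (0 : ℝ) 1, (quantile μ t - quantile ν t) ^ 2 := by
  have hq : IsProbabilityMeasure (qcoupling μ ν) := inferInstance
  set T := ∫ t in Set.Ioo (0 : ℝ) 1, (quantile μ t - quantile ν t) ^ 2 with hT
  have hTval : T = ∫ p : ℝ × ℝ, (p.1 - p.2) ^ 2 ∂(qcoupling μ ν) :=
    (qcoupling_sq_integral μ ν).symm
  have hmem : T ∈ { c | ∃ π : Measure (ℝ × ℝ), IsProbabilityMeasure π ∧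
      π.map Prod.fst = μ ∧ π.map Prod.snd = ν ∧ c = ∫ p, (p.1 - p.2) ^ 2 ∂π } :=
    ⟨qcoupling μ ν, hq, qcoupling_fst μ ν, qcoupling_snd μ ν, hTval⟩
  have hlb : ∀ c ∈ { c | ∃ π : Measure (ℝ × ℝ), IsProbabilityMeasure π ∧
      π.map Prod.fst = μ ∧ π.map Prod.snd = ν ∧ c = ∫ p, (p.1 - p.2) ^ 2 ∂π }, T ≤ c := by
    rintro c ⟨π, hπ, hfst, hsnd, rfl⟩
    rw [hTval, coupling_sq_expand μ ν π hfst hsnd hμ hν,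
      coupling_sq_expand μ ν (qcoupling μ ν) (qcoupling_fst μ ν) (qcoupling_snd μ ν) hμ hν]
    have := coupling_mul_le μ ν π hfst hsnd hμ hν
    linarith
  exact le_antisymm (csInf_le ⟨T, hlb⟩ hmem) (le_csInf ⟨T, hmem⟩ hlb)
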